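/- Let c : [0,1] → H^n be a geodesic path in hyperbolic space and v : [0,1] → ℝ^{n+1} a measurable unit spacelike field along c with ⟨v(t), c(t)⟩ = 0, ⟨v(t),v(t)⟩ = 1 and ⟨v(t), ċ(t)⟩ > 0 for (almost all) t. Then ⟨c(0), v(t)⟩ < 0 and ⟨c(1), v(t)⟩ > 0 for (almost all) t ∈ (0,1); hence the hyperplane v(t)^⊥ separates c(0) from c(1). -/

import Mathlib

/-- The Minkowski bilinear form on `ℝ^{n+1}`. -/
noncomputable def mink {n : ℕ} (v w : Fin (n+1) → ℝ) : ℝ :=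
  (∑ i, v i * w i) - 2 * v 0 * w 0

lemma mink_symm {n : ℕ} (v w : Fin (n+1) → ℝ) : mink v w = mink w v := by
  unfold mink
  rw [Finset.sum_congr rfl (fun i _ => mul_comm (v i) (w i))]
  ring

lemma mink_lin {n : ℕ} (v x y : Fin (n+1) → ℝ) (a b : ℝ) :
    mink v (a • x + b • y) = a * mink v x + b * mink v y := by
  simp only [mink, Pi.add_apply, Pi.smul_apply, smul_eq_mul]
  rw [show (∑ i, v i * (a * x i + b * y i))
      = a * (∑ i, v i * x i) + b * (∑ i, v i * y i) by
    rw [Finset.mul_sum, Finset.mul_sum, ← Finset.sum_add_distrib]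
    exact Finset.sum_congr rfl fun i _ => by ring]
  ring

/-- Let `c : [0,1] → H^n` be a (nonconstant, increasingly parametrized) geodesic path in
hyperbolic space, written `c(t) = cosh(s(t))·c₀ + sinh(s(t))·w` with `c₀ ∈ H^n`,
`w` a unit tangent vector at `c₀`, and `s` strictly increasing with `s(0) = 0`.
If `v` is a unit spacelike vector at time `t ∈ (0,1)` with `⟨v, c(t)⟩ = 0`,
`⟨v, v⟩ = 1` and `⟨v, ċ(t)⟩ > 0`, then `⟨c(0), v⟩ < 0` and `⟨c(1), v⟩ > 0`; hence the
hyperplane `v^⊥` separates `c(0)` from `c(1)`. -/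
theorem normal_density_separates_endpoints {n : ℕ}
    (c0 w : Fin (n+1) → ℝ)
    (hc0 : mink c0 c0 = -1) (hc00 : 0 < c0 0)
    (hw : mink w w = 1) (hortho : mink c0 w = 0)
    (s : ℝ → ℝ) (hs : StrictMonoOn s (Set.Icc (0:ℝ) 1)) (hs0 : s 0 = 0)
    (c : ℝ → Fin (n+1) → ℝ)
    (hc : c = fun u => Real.cosh (s u) • c0 + Real.sinh (s u) • w)
    (t : ℝ) (ht : t ∈ Set.Ioo (0:ℝ) 1)
    (cdot : Fin (n+1) → ℝ) (hder : HasDerivAt c cdot t)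
    (v : Fin (n+1) → ℝ)
    (hv1 : mink v (c t) = 0) (hv2 : mink v v = 1) (hv3 : 0 < mink v cdot) :
    mink (c 0) v < 0 ∧ 0 < mink (c 1) v := by
  have ht01 : t ∈ Set.Icc (0:ℝ) 1 := Set.mem_Icc_of_Ioo ht
  have h0I : (0:ℝ) ∈ Set.Icc (0:ℝ) 1 := by constructor <;> norm_num
  have h1I : (1:ℝ) ∈ Set.Icc (0:ℝ) 1 := by constructor <;> norm_num
  set A := mink v c0 with hA
  set B := mink v w with hB
  have hf : ∀ u, mink v (c u) = Real.cosh (s u) * A + Real.sinh (s u) * B := by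
    intro u; rw [hc]; exact mink_lin v c0 w _ _
  have hft : Real.cosh (s t) * A + Real.sinh (s t) * B = 0 := by
    rw [← hf t]; exact hv1
  -- derivative of u ↦ mink v (c u)
  have hcomp : ∀ i, HasDerivAt (fun u => c u i) (cdot i) t :=
    fun i => hasDerivAt_pi.mp hder i
  have hsum : HasDerivAt (fun u => ∑ i, v i * c u i) (∑ i, v i * cdot i) t :=
    HasDerivAt.fun_sum fun i _ => (hcomp i).const_mul (v i)
  have hfd : HasDerivAt (fun u => mink v (c u)) (mink v cdot) t := by
    have h := hsum.sub ((hcomp 0).const_mul (2 * v 0))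
    simpa [mink, mul_assoc, Pi.sub_def] using h
  -- find a point u > t where mink v (c u) > 0
  have hslope := hasDerivAt_iff_tendsto_slope.mp hfd
  have hev : ∀ᶠ u in nhdsWithin t {t}ᶜ, 0 < slope (fun u => mink v (c u)) t u :=
    hslope.eventually (eventually_gt_nhds hv3)
  have hmono : nhdsWithin t (Set.Ioi t) ≤ nhdsWithin t {t}ᶜ :=
    nhdsWithin_mono t fun x hx => Set.mem_compl_singleton_iff.mpr (ne_of_gt hx)
  have hIoo : Set.Ioo t 1 ∈ nhdsWithin t (Set.Ioi t) :=
    Ioo_mem_nhdsGT_of_mem ⟨le_refl t, ht.2⟩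
  obtain ⟨u, hu1, hu2⟩ :=
    ((hev.filter_mono hmono).and (Filter.eventually_of_mem hIoo fun x hx => hx)).exists
  have hut : t < u := hu2.1
  have hfu : 0 < mink v (c u) := by
    rw [slope_def_field] at hu1
    have h2 := mul_pos hu1 (sub_pos.mpr hut)
    rw [div_mul_cancel₀ _ (ne_of_gt (sub_pos.mpr hut))] at h2
    rw [hv1] at h2
    linarith
  have hfu' : 0 < Real.cosh (s u) * A + Real.sinh (s u) * B := by
    rw [← hf u]; exact hfu
  -- order facts on s
  have hx0pos : 0 < s t := by
    have := hs h0I ht01 ht.1; rwa [hs0] at this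
  have huI : u ∈ Set.Icc (0:ℝ) 1 := ⟨le_of_lt (lt_trans ht.1 hut), hu2.2.le⟩
  have hxu : s t < s u := hs ht01 huI hut
  have hx1 : s t < s 1 := hs ht01 h1I ht.2
  have c1 : 0 < Real.cosh (s t) := Real.cosh_pos _
  have st1 : 0 < Real.sinh (s t) := Real.sinh_pos_iff.mpr hx0pos
  have d1 : 0 < Real.sinh (s u) * Real.cosh (s t) - Real.cosh (s u) * Real.sinh (s t) := by
    have := Real.sinh_pos_iff.mpr (sub_pos.mpr hxu)
    rwa [Real.sinh_sub] at this
  have d2 : 0 < Real.sinh (s 1) * Real.cosh (s t) - Real.cosh (s 1) * Real.sinh (s t) := by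
    have := Real.sinh_pos_iff.mpr (sub_pos.mpr hx1)
    rwa [Real.sinh_sub] at this
  -- B > 0
  have hBD : B * (Real.sinh (s u) * Real.cosh (s t) - Real.cosh (s u) * Real.sinh (s t))
      = Real.cosh (s t) * (Real.cosh (s u) * A + Real.sinh (s u) * B)
        - Real.cosh (s u) * (Real.cosh (s t) * A + Real.sinh (s t) * B) := by ring
  have hBDpos : 0 < B * (Real.sinh (s u) * Real.cosh (s t)
      - Real.cosh (s u) * Real.sinh (s t)) := by
    rw [hBD, hft, mul_zero, sub_zero]
    exact mul_pos c1 hfu'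
  have hBpos : 0 < B := by
    rcases mul_pos_iff.mp hBDpos with ⟨h, _⟩ | ⟨_, h⟩
    · exact h
    · linarith
  constructor
  · rw [mink_symm, hf 0, hs0, Real.cosh_zero, Real.sinh_zero]
    have : Real.cosh (s t) * A = -(Real.sinh (s t) * B) := by linarith
    nlinarith [mul_pos st1 hBpos]
  · rw [mink_symm, hf 1]
    have hkey : Real.cosh (s t) * (Real.cosh (s 1) * A + Real.sinh (s 1) * B)
        = B * (Real.sinh (s 1) * Real.cosh (s t) - Real.cosh (s 1) * Real.sinh (s t))
          + Real.cosh (s 1) * (Real.cosh (s t) * A + Real.sinh (s t) * B) := by ring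
    rw [hft, mul_zero, add_zero] at hkey
    nlinarith [mul_pos hBpos d2]
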